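/- arXiv:1912.09552 — 2 statements merged into one kernel-verified Lean document; each statement's English description precedes it below -/
import Mathlib

section
/- Let ε > 0 and λ¹, λ² ∈ ℝ^T with λ¹_t = λ²_t + ε for every t. If p¹ maximizes R_{λ¹} over S and p² maximizes R_{λ²} over S, then Σ_{t=1}^T max(0, g_t(p¹)) ≤ Σ_{t=1}^T max(0, g_t(p²)). -/
/-- Increasing all penalty parameters by `ε > 0` does not increase
the total constraint violation of a maximizer of the penalized objective
`R_λ(p) = R(p) − Σ_t λ_t max(0, g_t(p))`. -/
theorem stmt_17
    (S : Type*) [Nonempty S] (T : ℕ)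
    (R : S → ℝ) (g : Fin T → S → ℝ)
    (ε : ℝ) (hε : 0 < ε)
    (lam1 lam2 : Fin T → ℝ) (hlam : ∀ t, lam1 t = lam2 t + ε)
    (p1 p2 : S)
    (hp1 : ∀ p : S, R p - ∑ t, lam1 t * max 0 (g t p) ≤
      R p1 - ∑ t, lam1 t * max 0 (g t p1))
    (hp2 : ∀ p : S, R p - ∑ t, lam2 t * max 0 (g t p) ≤
      R p2 - ∑ t, lam2 t * max 0 (g t p2)) :
    (∑ t, max 0 (g t p1)) ≤ ∑ t, max 0 (g t p2) := by
  have h1 := hp1 p2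
  have h2 := hp2 p1
  have hsum : ∀ p : S, ∑ t, lam1 t * max 0 (g t p)
      = (∑ t, lam2 t * max 0 (g t p)) + ε * ∑ t, max 0 (g t p) := by
    intro p
    rw [Finset.mul_sum, ← Finset.sum_add_distrib]
    exact Finset.sum_congr rfl fun t _ => by rw [hlam t]; ring
  rw [hsum p1, hsum p2] at h1
  have key : ε * ∑ t, max 0 (g t p1) ≤ ε * ∑ t, max 0 (g t p2) := by linarith
  exact le_of_mul_le_mul_left key hε
end

section
/- Let T ≥ 1, λ ∈ ℝ^T with λ_t ≥ 0 for all t, d^1,…,d^T ∈ ℝ^N, and r ∈ ℝ^T. Then the penalized reduced objective F(p) = Σ_{n=1}^N p_n·z(p)_n − Σ_{t=1}^T λ_t·max(0, (d^t)ᵀp − r_t) is strictly concave on P^G. -/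
/-- `G^n(Y^n | z, a^n, b^n) = G^n((exp(a_i − b_i (z + c_i)))_{i ∈ V_n})` where the
partition `V_n = {i | part i = n}`. -/
noncomputable def GzP (m N : ℕ) (part : Fin m → Fin N)
    (Gn : ∀ n : Fin N, ({i : Fin m // part i = n} → ℝ) → ℝ)
    (c : Fin m → ℝ) (n : Fin N) (z : ℝ)
    (ab : ({i : Fin m // part i = n} → ℝ) × ({i : Fin m // part i = n} → ℝ)) : ℝ :=
  Gn n fun i => Real.exp (ab.1 i - ab.2 i * (z + c i.1))

/-- `ĝ_n(z) = min_{(a^n, b^n) ∈ A^n} G^n(Y^n | z, a^n, b^n)`. -/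
noncomputable def ghatP (m N : ℕ) (part : Fin m → Fin N)
    (Gn : ∀ n : Fin N, ({i : Fin m // part i = n} → ℝ) → ℝ)
    (c : Fin m → ℝ)
    (An : ∀ n : Fin N,
      Set (({i : Fin m // part i = n} → ℝ) × ({i : Fin m // part i = n} → ℝ)))
    (n : Fin N) (z : ℝ) : ℝ :=
  sInf (GzP m N part Gn c n z '' An n)


section AuxStmt19
open Real


/-- `g` is a pointwise minimum of functions `z ↦ K e^{-β z}` with `0 < β ≤ B`, `K > 0`. -/
def MinRep (g : ℝ → ℝ) (B : ℝ) : Prop :=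
  ∀ z : ℝ, ∃ β K : ℝ, 0 < β ∧ β ≤ B ∧ 0 < K ∧ g z = Real.exp (-(β * z)) * K ∧
    ∀ w, g w ≤ Real.exp (-(β * w)) * K

lemma MinRep.pos {g : ℝ → ℝ} {B : ℝ} (h : MinRep g B) (z : ℝ) : 0 < g z := by
  obtain ⟨β, K, hβ, hβB, hK, heq, _⟩ := h z
  rw [heq]; positivity

lemma MinRep.anti {g : ℝ → ℝ} {B : ℝ} (h : MinRep g B) : StrictAnti g := by
  intro z z' hzz
  obtain ⟨β, K, hβ, hβB, hK, heq, hub⟩ := h z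
  calc g z' ≤ Real.exp (-(β * z')) * K := hub z'
    _ < Real.exp (-(β * z)) * K := by
        apply mul_lt_mul_of_pos_right _ hK
        exact Real.exp_lt_exp.2 (by nlinarith)
    _ = g z := heq.symm

lemma MinRep.lip {g : ℝ → ℝ} {B : ℝ} (h : MinRep g B) (hB : 0 < B) :
    ∀ z z' : ℝ, z < z' → g z ≤ g z' * Real.exp (B * (z' - z)) := by
  intro z z' hzz
  obtain ⟨β, K, hβ, hβB, hK, heq, hub⟩ := h z'
  calc g z ≤ Real.exp (-(β * z)) * K := hub z
    _ = (Real.exp (-(β * z')) * K) * Real.exp (β * (z' - z)) := by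
        rw [mul_right_comm, ← Real.exp_add]; ring_nf
    _ ≤ (Real.exp (-(β * z')) * K) * Real.exp (B * (z' - z)) := by
        apply mul_le_mul_of_nonneg_left _ (by positivity)
        exact Real.exp_le_exp.2 (by nlinarith)
    _ = g z' * Real.exp (B * (z' - z)) := by rw [heq]

lemma MinRep.logconc {g : ℝ → ℝ} {B : ℝ} (h : MinRep g B) :
    ∀ z1 z2 lam : ℝ, 0 ≤ lam → lam ≤ 1 →
      g z1 ^ lam * g z2 ^ (1 - lam) ≤ g (lam * z1 + (1 - lam) * z2) := by
  intro z1 z2 lam hl0 hl1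
  obtain ⟨β, K, hβ, hβB, hK, heq, hub⟩ := h (lam * z1 + (1 - lam) * z2)
  have h1 : g z1 ^ lam ≤ (Real.exp (-(β * z1)) * K) ^ lam :=
    Real.rpow_le_rpow (h.pos z1).le (hub z1) hl0
  have h2 : g z2 ^ (1 - lam) ≤ (Real.exp (-(β * z2)) * K) ^ (1 - lam) :=
    Real.rpow_le_rpow (h.pos z2).le (hub z2) (by linarith)
  calc g z1 ^ lam * g z2 ^ (1 - lam)
      ≤ (Real.exp (-(β * z1)) * K) ^ lam * (Real.exp (-(β * z2)) * K) ^ (1 - lam) := by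
        apply mul_le_mul h1 h2 (Real.rpow_nonneg (h.pos z2).le _) (by positivity)
    _ = Real.exp (-(β * (lam * z1 + (1 - lam) * z2))) * K := by
        rw [Real.mul_rpow (Real.exp_pos _).le hK.le,
          Real.mul_rpow (Real.exp_pos _).le hK.le, ← Real.exp_mul, ← Real.exp_mul]
        rw [show rexp (-(β * z1) * lam) * K ^ lam * (rexp (-(β * z2) * (1 - lam)) * K ^ (1 - lam)) = (rexp (-(β * z1) * lam) * rexp (-(β * z2) * (1 - lam))) * (K ^ lam * K ^ (1 - lam)) from by ring, ← Real.exp_add, ← Real.rpow_add hK]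
        rw [show lam + (1 - lam) = (1:ℝ) from by ring, Real.rpow_one]
        congr 2
        ring
    _ = g (lam * z1 + (1 - lam) * z2) := heq.symm


lemma zeta_anti {g ζ : ℝ → ℝ} (hanti : StrictAnti g)
    (hζ : ∀ x : ℝ, 0 < x → g (ζ x) = x) :
    ∀ x y : ℝ, 0 < x → x < y → ζ y < ζ x := by
  intro x y hx hxy
  rcases lt_trichotomy (ζ y) (ζ x) with h | h | h
  · exact h
  · exfalso; have := hζ x hx; rw [← h, hζ y (hx.trans hxy)] at this; linarith
  · exfalso
    have := hanti h
    rw [hζ x hx, hζ y (hx.trans hxy)] at this; linarith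

lemma zeta_slope {g ζ : ℝ → ℝ} {B : ℝ} (hB : (0:ℝ) < B) (hanti : StrictAnti g)
    (hlip : ∀ z z' : ℝ, z < z' → g z ≤ g z' * Real.exp (B * (z' - z)))
    (hζ : ∀ x : ℝ, 0 < x → g (ζ x) = x) :
    ∀ x y : ℝ, 0 < x → x < y → ζ y ≤ ζ x - (Real.log y - Real.log x) / B := by
  intro x y hx hxy
  have hy : 0 < y := hx.trans hxy
  have hzz : ζ y < ζ x := zeta_anti hanti hζ x y hx hxy
  have h1 : y ≤ x * Real.exp (B * (ζ x - ζ y)) := by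
    have := hlip (ζ y) (ζ x) hzz
    rwa [hζ y hy, hζ x hx] at this
  have h2 : Real.log y ≤ Real.log x + B * (ζ x - ζ y) := by
    have := Real.log_le_log hy h1
    rwa [Real.log_mul (ne_of_gt hx) (ne_of_gt (Real.exp_pos _)), Real.log_exp] at this
  have h3 : (Real.log y - Real.log x) / B ≤ ζ x - ζ y := by
    rw [div_le_iff₀ hB]; nlinarith
  linarith

lemma zeta_conc {g ζ : ℝ → ℝ} (hanti : StrictAnti g)
    (hlc : ∀ z1 z2 lam : ℝ, 0 ≤ lam → lam ≤ 1 →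
      g z1 ^ lam * g z2 ^ (1 - lam) ≤ g (lam * z1 + (1 - lam) * z2))
    (hζ : ∀ x : ℝ, 0 < x → g (ζ x) = x) :
    ∀ x y lam : ℝ, 0 < x → 0 < y → 0 ≤ lam → lam ≤ 1 →
      lam * ζ x + (1 - lam) * ζ y ≤ ζ (x ^ lam * y ^ (1 - lam)) := by
  intro x y lam hx hy hl0 hl1
  have hgm : 0 < x ^ lam * y ^ (1 - lam) :=
    mul_pos (Real.rpow_pos_of_pos hx _) (Real.rpow_pos_of_pos hy _)
  by_contra hcon
  push_neg at hcon
  have h1 : g (lam * ζ x + (1 - lam) * ζ y) < g (ζ (x ^ lam * y ^ (1 - lam))) := hanti hcon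
  rw [hζ _ hgm] at h1
  have h2 := hlc (ζ x) (ζ y) lam hl0 hl1
  rw [hζ x hx, hζ y hy] at h2
  linarith

set_option maxHeartbeats 800000 in
/-- Core lemma: `x ↦ x ζ(x)` is strictly concave on `(0,∞)` when `u ↦ ζ(e^u)` is
concave with slopes `≤ -1/B`. -/
lemma psi_strict {ζ : ℝ → ℝ} {B : ℝ} (hB : (0:ℝ) < B)
    (hslope : ∀ x y : ℝ, 0 < x → x < y → ζ y ≤ ζ x - (Real.log y - Real.log x) / B)
    (hconc : ∀ x y lam : ℝ, 0 < x → 0 < y → 0 ≤ lam → lam ≤ 1 →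
      lam * ζ x + (1 - lam) * ζ y ≤ ζ (x ^ lam * y ^ (1 - lam))) :
    ∀ x y μ : ℝ, 0 < x → 0 < y → x < y → 0 < μ → μ < 1 →
      μ * (x * ζ x) + (1 - μ) * (y * ζ y) < (μ * x + (1 - μ) * y) * ζ (μ * x + (1 - μ) * y) := by
  intro x y μ hx hy hxy hμ0 hμ1
  set xt : ℝ := μ * x + (1 - μ) * y with hxt
  have hxt1 : x < xt := by rw [hxt]; nlinarith
  have hxt2 : xt < y := by rw [hxt]; nlinarith
  have hxtpos : 0 < xt := hx.trans hxt1
  set ux : ℝ := Real.log x with hux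
  set ut : ℝ := Real.log xt with hut
  set uy : ℝ := Real.log y with huy
  have huxt : ux < ut := Real.log_lt_log hx hxt1
  have huty : ut < uy := Real.log_lt_log hxtpos hxt2
  set g : ℝ := (ζ x - ζ xt) / (ux - ut) with hg
  have hgeq : ζ x = ζ xt + g * (ux - ut) := by
    rw [hg, div_mul_cancel₀ _ (by linarith : ux - ut ≠ 0)]; ring
  have hgB : g ≤ -(1 / B) := by
    have h1 := hslope x xt hx hxt1
    rw [← hux, ← hut] at h1
    rw [hg, div_le_iff_of_neg (by linarith : ux - ut < 0)]
    rw [show -(1/B)*(ux-ut) = (ut-ux)/B from by ring]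
    linarith
  have hgneg : g < 0 := lt_of_le_of_lt hgB (neg_lt_zero.mpr (by positivity))
  -- concavity gives support at y
  set lam : ℝ := (uy - ut) / (uy - ux) with hlam
  have hne : uy - ux ≠ 0 := by intro h; rw [sub_eq_zero] at h; linarith
  have hlamD : lam * (uy - ux) = uy - ut := div_mul_cancel₀ _ hne
  have hl0 : 0 < lam := div_pos (by linarith) (by linarith)
  have hl1 : lam < 1 := by
    rw [hlam, div_lt_one (by linarith)]; linarith
  have hucomb : lam * ux + (1 - lam) * uy = ut := by linarith [hlamD]
  have hgm : x ^ lam * y ^ (1 - lam) = xt := by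
    rw [Real.rpow_def_of_pos hx, Real.rpow_def_of_pos hy, ← Real.exp_add]
    rw [show Real.log x * lam + Real.log y * (1 - lam) = lam * ux + (1 - lam) * uy from by
      rw [← hux, ← huy]; ring]
    rw [hucomb, hut, Real.exp_log hxtpos]
  have hcc := hconc x y lam hx hy hl0.le hl1.le
  rw [hgm] at hcc
  have hkey : lam * (ut - ux) = (1 - lam) * (uy - ut) := by linarith [hlamD]
  have hkey_g : lam * (g * (ux - ut)) + (1 - lam) * (g * (uy - ut)) = 0 := by
    linear_combination (-g) * hkey
  have hsupy : ζ y ≤ ζ xt + g * (uy - ut) := by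
    have h2 : lam * ζ x = lam * ζ xt + lam * (g * (ux - ut)) := by rw [hgeq]; ring
    have hl1' : (0:ℝ) < 1 - lam := by linarith
    nlinarith [hcc, h2, hkey_g, hl1']
  -- entropy strict inequality
  have hD : xt * ut < μ * (x * ux) + (1 - μ) * (y * uy) := by
    have h := strictConvexOn_mul_log.2 (Set.mem_Ici.2 hx.le) (Set.mem_Ici.2 hy.le)
      (ne_of_lt hxy) hμ0 (by linarith : (0:ℝ) < 1 - μ) (by ring)
    simp only [smul_eq_mul] at h
    rw [hut, hux, huy, hxt]
    linarith [h]
  -- assemble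
  have hA : (1 - μ) * y * ζ y ≤ (1 - μ) * y * (ζ xt + g * (uy - ut)) :=
    mul_le_mul_of_nonneg_left hsupy (mul_nonneg (by linarith) hy.le)
  have hBx : μ * x * ζ x = μ * x * (ζ xt + g * (ux - ut)) := by rw [← hgeq]
  have heq2 : μ * x * (ζ xt + g * (ux - ut)) + (1 - μ) * y * (ζ xt + g * (uy - ut))
      = xt * ζ xt + g * (μ * (x * ux) + (1 - μ) * (y * uy) - xt * ut) := by
    rw [hxt]; ring
  have hgD : g * (μ * (x * ux) + (1 - μ) * (y * uy) - xt * ut) < 0 :=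
    mul_neg_of_neg_of_pos hgneg (by linarith)
  linarith [hA, hBx, heq2, hgD]

lemma ghat_min (m N : ℕ) (part : Fin m → Fin N)
    (Gn : ∀ n : Fin N, ({i : Fin m // part i = n} → ℝ) → ℝ)
    (c : Fin m → ℝ)
    (An : ∀ n : Fin N,
      Set (({i : Fin m // part i = n} → ℝ) × ({i : Fin m // part i = n} → ℝ)))
    (n : Fin N) (i₀ : {i : Fin m // part i = n})
    (hGcont : ContinuousOn (Gn n) {Y : {i : Fin m // part i = n} → ℝ | ∀ i, 0 < Y i})
    (hGhom : ∀ lam : ℝ, 0 < lam → ∀ Y : {i : Fin m // part i = n} → ℝ,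
      (∀ i, 0 < Y i) → Gn n (lam • Y) = lam * Gn n Y)
    (hAne : (An n).Nonempty) (hAcomp : IsCompact (An n))
    (hAb : ∀ ab ∈ An n, ∃ β : ℝ, 0 < β ∧ ∀ i, ab.2 i = β)
    (hpos : ∃ z0, 0 < ghatP m N part Gn c An n z0) :
    ∃ B : ℝ, 0 < B ∧ ∀ z : ℝ, ∃ β K : ℝ, 0 < β ∧ β ≤ B ∧ 0 < K ∧
      ghatP m N part Gn c An n z = Real.exp (-(β * z)) * K ∧
      ∀ w, ghatP m N part Gn c An n w ≤ Real.exp (-(β * w)) * K := by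
  classical
  obtain ⟨z0, hz0⟩ := hpos
  -- continuity of ab ↦ GzP ... z ab on An n
  have hcont : ∀ z : ℝ, ContinuousOn (GzP m N part Gn c n z) (An n) := by
    intro z
    have hY : Continuous (fun ab : ({i : Fin m // part i = n} → ℝ) × ({i : Fin m // part i = n} → ℝ) =>
        fun i => Real.exp (ab.1 i - ab.2 i * (z + c i.1))) := by
      apply continuous_pi
      intro i
      exact Real.continuous_exp.comp
        (((continuous_apply i).comp continuous_fst).sub
          (((continuous_apply i).comp continuous_snd).mul continuous_const))
    exact hGcont.comp hY.continuousOn (fun ab _ => fun i => Real.exp_pos _)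
  -- minimizers
  have hexists : ∀ z : ℝ, ∃ ab ∈ An n,
      ghatP m N part Gn c An n z = GzP m N part Gn c n z ab ∧
      ∀ ab' ∈ An n, GzP m N part Gn c n z ab ≤ GzP m N part Gn c n z ab' := by
    intro z
    obtain ⟨ab, hab, hmin⟩ := hAcomp.exists_isMinOn hAne (hcont z)
    refine ⟨ab, hab, ?_, fun ab' hab' => hmin hab'⟩
    have hleast : IsLeast (GzP m N part Gn c n z '' An n) (GzP m N part Gn c n z ab) := by
      constructor
      · exact Set.mem_image_of_mem _ hab
      · rintro _ ⟨ab', hab', rfl⟩; exact hmin hab'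
    exact hleast.csInf_eq
  have hlb : ∀ z : ℝ, ∀ ab ∈ An n,
      ghatP m N part Gn c An n z ≤ GzP m N part Gn c n z ab := by
    intro z ab hab
    obtain ⟨ab', hab', heq, hmin⟩ := hexists z
    rw [heq]; exact hmin ab hab
  -- representation of GzP along one ab
  have hrep : ∀ ab ∈ An n, ∃ β K : ℝ, 0 < β ∧ β = ab.2 i₀ ∧
      ∀ w : ℝ, GzP m N part Gn c n w ab = Real.exp (-(β * w)) * K := by
    intro ab hab
    obtain ⟨β, hβ, hβi⟩ := hAb ab hab
    refine ⟨β, Gn n (fun i => Real.exp (ab.1 i - β * c i.1)), hβ, (hβi i₀).symm, ?_⟩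
    · intro w
      have hfun : (fun i : {i : Fin m // part i = n} => Real.exp (ab.1 i - ab.2 i * (w + c i.1)))
          = Real.exp (-(β * w)) • (fun i => Real.exp (ab.1 i - β * c i.1)) := by
        funext i
        simp only [Pi.smul_apply, smul_eq_mul, hβi i, ← Real.exp_add]
        ring_nf
      show Gn n _ = _
      rw [hfun, hGhom _ (Real.exp_pos _) _ (fun i => Real.exp_pos _)]
  -- max of β
  have hβcont : Continuous (fun ab : ({i : Fin m // part i = n} → ℝ) × ({i : Fin m // part i = n} → ℝ) => ab.2 i₀) :=
    (continuous_apply i₀).comp continuous_snd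
  obtain ⟨abM, habM, hmax⟩ := hAcomp.exists_isMaxOn hAne hβcont.continuousOn
  obtain ⟨βM, hβM, hβMi⟩ := hAb abM habM
  refine ⟨abM.2 i₀, by rw [hβMi i₀]; exact hβM, ?_⟩
  intro z
  obtain ⟨ab, hab, heq, hmin⟩ := hexists z
  obtain ⟨β, K, hβ, hβeq, hGrep⟩ := hrep ab hab
  have hKpos : 0 < K := by
    have h1 : ghatP m N part Gn c An n z0 ≤ Real.exp (-(β * z0)) * K := by
      rw [← hGrep z0]; exact hlb z0 ab hab
    nlinarith [Real.exp_pos (-(β * z0)), hz0]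
  refine ⟨β, K, hβ, ?_, hKpos, by rw [heq, hGrep], fun w => by rw [← hGrep w]; exact hlb w ab hab⟩
  rw [hβeq]
  exact hmax hab

end AuxStmt19

set_option maxHeartbeats 1600000 in
/-- For penalty parameters `λ ≥ 0`, the penalized reduced objective
`F(p) = Σ_n p_n z(p)_n − Σ_t λ_t max(0, (d^t)ᵀ p − r_t)` is strictly concave on
the open simplex `P^G`, where `z(p)` is the unique vector with
`ĝ_n(z(p)_n) = p_n/(1 − Σ_l p_l)`. -/
theorem stmt_19
    (m N : ℕ) (hN : 1 ≤ N)
    (part : Fin m → Fin N) (hpart : ∀ n : Fin N, ∃ i, part i = n)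
    (Gn : ∀ n : Fin N, ({i : Fin m // part i = n} → ℝ) → ℝ)
    (hGnonneg : ∀ n, ∀ Y : {i : Fin m // part i = n} → ℝ,
      (∀ i, 0 < Y i) → 0 ≤ Gn n Y)
    (hGsmooth : ∀ n, ContDiffOn ℝ 2 (Gn n)
      {Y : {i : Fin m // part i = n} → ℝ | ∀ i, 0 < Y i})
    (hGhom : ∀ n, ∀ lam : ℝ, 0 < lam → ∀ Y : {i : Fin m // part i = n} → ℝ,
      (∀ i, 0 < Y i) → Gn n (lam • Y) = lam * Gn n Y)
    (hGd1 : ∀ n, ∀ Y : {i : Fin m // part i = n} → ℝ, (∀ i, 0 < Y i) →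
      ∀ i, 0 < fderiv ℝ (Gn n) Y (Pi.single i 1))
    (hGd2 : ∀ n, ∀ Y : {i : Fin m // part i = n} → ℝ, (∀ i, 0 < Y i) →
      ∀ i j, i ≠ j →
        fderiv ℝ (fun W => fderiv ℝ (Gn n) W (Pi.single i 1)) Y (Pi.single j 1) ≤ 0)
    (An : ∀ n : Fin N,
      Set (({i : Fin m // part i = n} → ℝ) × ({i : Fin m // part i = n} → ℝ)))
    (hAne : ∀ n, (An n).Nonempty) (hAconv : ∀ n, Convex ℝ (An n))
    (hAcomp : ∀ n, IsCompact (An n))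
    (hAb : ∀ n, ∀ ab ∈ An n, ∃ β : ℝ, 0 < β ∧ ∀ i, ab.2 i = β)
    (c : Fin m → ℝ) (hc : ∀ i, 0 ≤ c i)
    (T : ℕ) (hT : 1 ≤ T)
    (lam : Fin T → ℝ) (hlam : ∀ t, 0 ≤ lam t)
    (d : Fin T → Fin N → ℝ) (r : Fin T → ℝ)
    (Z : (Fin N → ℝ) → Fin N → ℝ)
    (hZ : ∀ p : Fin N → ℝ, (∀ n, 0 < p n) → (∑ n, p n) < 1 →
      ∀ n, ghatP m N part Gn c An n (Z p n) = p n / (1 - ∑ l, p l)) :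
    StrictConcaveOn ℝ
      {p : Fin N → ℝ | (∀ n, 0 < p n) ∧ (∑ n, p n) < 1}
      (fun p : Fin N → ℝ =>
        (∑ n, p n * Z p n) -
          ∑ t, lam t * max 0 ((∑ n, d t n * p n) - r t)) := by
  classical
  have hNpos : (0:ℝ) < N := by exact_mod_cast hN
  -- per-partition function ζ n and its properties
  have main : ∀ n : Fin N, ∃ ζn : ℝ → ℝ,
      (∀ p : Fin N → ℝ, (∀ k, 0 < p k) → (∑ k, p k) < 1 →
        Z p n = ζn (p n / (1 - ∑ l, p l))) ∧
      (∀ x y μ : ℝ, 0 < x → 0 < y → 0 < μ → μ < 1 →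
        μ * (x * ζn x) + (1 - μ) * (y * ζn y)
          ≤ (μ * x + (1 - μ) * y) * ζn (μ * x + (1 - μ) * y)) ∧
      (∀ x y μ : ℝ, 0 < x → 0 < y → x ≠ y → 0 < μ → μ < 1 →
        μ * (x * ζn x) + (1 - μ) * (y * ζn y)
          < (μ * x + (1 - μ) * y) * ζn (μ * x + (1 - μ) * y)) := by
    intro n
    obtain ⟨i0, hi0⟩ := hpart n
    -- positivity of ghat somewhere
    have hsum0 : ∑ _l : Fin N, (1:ℝ)/(2*(N:ℝ)) = (1:ℝ)/2 := by
      rw [Finset.sum_const, Finset.card_univ, Fintype.card_fin, nsmul_eq_mul]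
      field_simp
    have h0 := hZ (fun _ => 1/(2*(N:ℝ))) (fun _ => by positivity)
      (by rw [hsum0]; norm_num) n
    simp only at h0
    rw [hsum0] at h0
    have hpos : ∃ z0, 0 < ghatP m N part Gn c An n z0 :=
      ⟨Z (fun _ => 1/(2*(N:ℝ))) n, by rw [h0]; positivity⟩
    obtain ⟨B, hB, hminrep⟩ := ghat_min m N part Gn c An n ⟨i0, hi0⟩
      (hGsmooth n).continuousOn (hGhom n) (hAne n) (hAcomp n) (hAb n) hpos
    have hmr : MinRep (ghatP m N part Gn c An n) B := hminrep
    have hanti := hmr.anti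
    have hlip := hmr.lip hB
    have hlc := hmr.logconc
    -- the one-dimensional inverse function ζn
    set ζn : ℝ → ℝ := fun x => Z (fun _ => x/(1+(N:ℝ)*x)) n with hζdef
    have hζ : ∀ x : ℝ, 0 < x → ghatP m N part Gn c An n (ζn x) = x := by
      intro x hx
      have hden : (0:ℝ) < 1 + (N:ℝ)*x := by positivity
      have hsumx : ∑ _l : Fin N, x/(1+(N:ℝ)*x) = (N:ℝ)*(x/(1+(N:ℝ)*x)) := by
        rw [Finset.sum_const, Finset.card_univ, Fintype.card_fin, nsmul_eq_mul]
      have hlt : (N:ℝ)*(x/(1+(N:ℝ)*x)) < 1 := by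
        rw [← mul_div_assoc, div_lt_one hden]; linarith
      have h2 := hZ (fun _ => x/(1+(N:ℝ)*x)) (fun _ => by positivity)
        (by rw [hsumx]; exact hlt) n
      simp only at h2
      rw [hsumx] at h2
      rw [hζdef]
      simp only
      rw [h2]
      field_simp
      ring
    have hZζ : ∀ p : Fin N → ℝ, (∀ k, 0 < p k) → (∑ k, p k) < 1 →
        Z p n = ζn (p n / (1 - ∑ l, p l)) := by
      intro p hp1 hp2
      apply hanti.injective
      rw [hZ p hp1 hp2 n, hζ _ (div_pos (hp1 n) (by linarith))]
    have hslope := zeta_slope hB hanti hlip hζ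
    have hconc := zeta_conc hanti hlc hζ
    have hstrict : ∀ x y μ : ℝ, 0 < x → 0 < y → x ≠ y → 0 < μ → μ < 1 →
        μ * (x * ζn x) + (1 - μ) * (y * ζn y)
          < (μ * x + (1 - μ) * y) * ζn (μ * x + (1 - μ) * y) := by
      intro x y μ hx hy hxy hμ0 hμ1
      rcases lt_or_gt_of_ne hxy with h | h
      · exact psi_strict hB hslope hconc x y μ hx hy h hμ0 hμ1
      · have h' := psi_strict hB hslope hconc y x (1-μ) hy hx h (by linarith) (by linarith)
        rw [show (1-μ)*y + (1-(1-μ))*x = μ*x+(1-μ)*y from by ring] at h'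
        rw [show (1-(1-μ)) = μ from by ring] at h'
        linarith
    refine ⟨ζn, hZζ, ?_, hstrict⟩
    intro x y μ hx hy hμ0 hμ1
    rcases eq_or_ne x y with h | h
    · subst h
      rw [show μ*x+(1-μ)*x = x from by ring]
      apply le_of_eq; ring
    · exact (hstrict x y μ hx hy h hμ0 hμ1).le
  choose ζ hZζ hle hlt using main
  constructor
  · -- convexity of the domain
    intro p hp q hq a b ha hb hab
    simp only [Set.mem_setOf_eq] at hp hq ⊢
    constructor
    · intro k
      have hpk := hp.1 k; have hqk := hq.1 k
      simp only [Pi.add_apply, Pi.smul_apply, smul_eq_mul]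
      rcases le_total (p k) (q k) with h | h
      · nlinarith [mul_le_mul_of_nonneg_left h hb]
      · nlinarith [mul_le_mul_of_nonneg_left h hb]
    · have hsum : ∑ l, (a • p + b • q) l = a * ∑ l, p l + b * ∑ l, q l := by
        simp only [Pi.add_apply, Pi.smul_apply, smul_eq_mul]
        rw [Finset.sum_add_distrib, Finset.mul_sum, Finset.mul_sum]
      rw [hsum]
      rcases eq_or_lt_of_le hb with hb0 | hb0
      · have ha1 : a = 1 := by linarith
        rw [ha1, ← hb0]
        simpa using hp.2
      · nlinarith [mul_le_mul_of_nonneg_left hp.2.le ha, mul_lt_mul_of_pos_left hq.2 hb0]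
  · intro p hp q hq hpq a b ha hb hab
    simp only [Set.mem_setOf_eq] at hp hq
    simp only [smul_eq_mul]
    set w : Fin N → ℝ := a • p + b • q with hwdef
    have hwk : ∀ k, w k = a * p k + b * q k := fun k => by
      rw [hwdef]; simp [Pi.add_apply, Pi.smul_apply, smul_eq_mul]
    have hw1 : ∀ k, 0 < w k := fun k =>
      (hwk k) ▸ add_pos (mul_pos ha (hp.1 k)) (mul_pos hb (hq.1 k))
    have hsumw : ∑ l, w l = a * ∑ l, p l + b * ∑ l, q l := by
      rw [show ∑ l, w l = ∑ l, (a * p l + b * q l) from Finset.sum_congr rfl fun l _ => hwk l]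
      rw [Finset.sum_add_distrib, Finset.mul_sum, Finset.mul_sum]
    have hw2 : ∑ l, w l < 1 := by rw [hsumw]; nlinarith [hp.2, hq.2]
    set sp : ℝ := 1 - ∑ l, p l with hspdef
    set sq : ℝ := 1 - ∑ l, q l with hsqdef
    set sw : ℝ := 1 - ∑ l, w l with hswdef
    have hsp : 0 < sp := by rw [hspdef]; linarith [hp.2]
    have hsq : 0 < sq := by rw [hsqdef]; linarith [hq.2]
    have hsw : 0 < sw := by rw [hswdef]; linarith [hw2]
    have hswe : sw = a * sp + b * sq := by
      rw [hswdef, hspdef, hsqdef, hsumw]; ring_nf; linarith [hab]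
    clear_value w sp sq sw
    set μ : ℝ := a * sp / sw with hμdef
    clear_value μ
    have hμ0 : 0 < μ := by rw [hμdef]; exact div_pos (mul_pos ha hsp) hsw
    have hμ1 : μ < 1 := by
      rw [hμdef, div_lt_one hsw]
      nlinarith [mul_pos hb hsq]
    have hμc : 1 - μ = b * sq / sw := by
      rw [hμdef, eq_div_iff hsw.ne']
      nlinarith [hswe, mul_div_cancel₀ (a*sp) hsw.ne']
    -- per-coordinate inequality
    have hterm : ∀ k : Fin N,
        (p k / sp ≠ q k / sq →
          a * (p k * Z p k) + b * (q k * Z q k) < w k * Z w k) ∧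
        a * (p k * Z p k) + b * (q k * Z q k) ≤ w k * Z w k := by
      intro k
      have hxp : 0 < p k / sp := div_pos (hp.1 k) hsp
      have hxq : 0 < q k / sq := div_pos (hq.1 k) hsq
      have hZp : Z p k = ζ k (p k / sp) := by
        rw [hspdef]; exact hZζ k p hp.1 hp.2
      have hZq : Z q k = ζ k (q k / sq) := by
        rw [hsqdef]; exact hZζ k q hq.1 hq.2
      have hZw : Z w k = ζ k (w k / sw) := by
        rw [hswdef]; exact hZζ k w hw1 hw2
      have hxw : w k / sw = μ * (p k / sp) + (1 - μ) * (q k / sq) := by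
        rw [hwk k, hμc, hμdef]
        field_simp
      have e1 : a * (p k * Z p k) = sw * (μ * ((p k / sp) * ζ k (p k / sp))) := by
        rw [hZp, hμdef]
        field_simp
      have e2 : b * (q k * Z q k) = sw * ((1 - μ) * ((q k / sq) * ζ k (q k / sq))) := by
        rw [hZq, hμc]
        field_simp
      have e3 : w k * Z w k
          = sw * ((μ * (p k / sp) + (1 - μ) * (q k / sq))
              * ζ k (μ * (p k / sp) + (1 - μ) * (q k / sq))) := by
        rw [hZw, hxw, show w k = sw * (w k / sw) from (mul_div_cancel₀ _ hsw.ne').symm, hxw]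
        ring
      constructor
      · intro hne
        have hk := hlt k (p k / sp) (q k / sq) μ hxp hxq hne hμ0 hμ1
        rw [e1, e2, e3]
        rw [← mul_add]
        exact mul_lt_mul_of_pos_left hk hsw
      · have hk := hle k (p k / sp) (q k / sq) μ hxp hxq hμ0 hμ1
        rw [e1, e2, e3]
        rw [← mul_add]
        exact mul_le_mul_of_nonneg_left hk hsw.le
    -- some coordinate has different ratios
    have hex : ∃ k, p k / sp ≠ q k / sq := by
      by_contra hcon
      push_neg at hcon
      have hpq' : ∀ k, p k * sq = q k * sp := by
        intro k
        have h := hcon k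
        rw [div_eq_div_iff hsp.ne' hsq.ne'] at h
        exact h
      have hsum : (∑ l, p l) * sq = (∑ l, q l) * sp := by
        rw [Finset.sum_mul, Finset.sum_mul]
        exact Finset.sum_congr rfl fun l _ => hpq' l
      have hspq : sp = sq := by
        have hA : (1 - sp) * sq = (1 - sq) * sp := by
          rw [show (1:ℝ) - sp = ∑ l, p l from by rw [hspdef]; ring,
            show (1:ℝ) - sq = ∑ l, q l from by rw [hsqdef]; ring]
          exact hsum
        linarith [hA]
      apply hpq
      funext k
      have := hpq' k
      rw [hspq] at this
      exact mul_right_cancel₀ hsq.ne' this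
    obtain ⟨k₀, hk₀⟩ := hex
    have hmain : a * (∑ n, p n * Z p n) + b * (∑ n, q n * Z q n) < ∑ n, w n * Z w n := by
      calc a * (∑ n, p n * Z p n) + b * (∑ n, q n * Z q n)
          = ∑ n, (a * (p n * Z p n) + b * (q n * Z q n)) := by
            rw [Finset.sum_add_distrib, Finset.mul_sum, Finset.mul_sum]
        _ < ∑ n, w n * Z w n := by
            apply Finset.sum_lt_sum (fun k _ => (hterm k).2)
            exact ⟨k₀, Finset.mem_univ _, (hterm k₀).1 hk₀⟩
    have hpen : ∀ t, lam t * max 0 ((∑ n, d t n * w n) - r t)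
        ≤ a * (lam t * max 0 ((∑ n, d t n * p n) - r t))
          + b * (lam t * max 0 ((∑ n, d t n * q n) - r t)) := by
      intro t
      have hX : (∑ n, d t n * w n) = a * (∑ n, d t n * p n) + b * (∑ n, d t n * q n) := by
        rw [show ∑ n, d t n * w n = ∑ n, (a * (d t n * p n) + b * (d t n * q n)) from
          Finset.sum_congr rfl fun k _ => by rw [hwk k]; ring]
        rw [Finset.sum_add_distrib, Finset.mul_sum, Finset.mul_sum]
      have hd : (∑ n, d t n * w n) - r t
          = a * ((∑ n, d t n * p n) - r t) + b * ((∑ n, d t n * q n) - r t) := by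
        rw [hX]; linear_combination (r t) * hab
      have hmax : max 0 ((∑ n, d t n * w n) - r t)
          ≤ a * max 0 ((∑ n, d t n * p n) - r t) + b * max 0 ((∑ n, d t n * q n) - r t) := by
        apply max_le
        · exact add_nonneg (mul_nonneg ha.le (le_max_left _ _))
            (mul_nonneg hb.le (le_max_left _ _))
        · rw [hd]
          exact add_le_add (mul_le_mul_of_nonneg_left (le_max_right _ _) ha.le)
            (mul_le_mul_of_nonneg_left (le_max_right _ _) hb.le)
      calc lam t * max 0 ((∑ n, d t n * w n) - r t)
          ≤ lam t * (a * max 0 ((∑ n, d t n * p n) - r t)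
              + b * max 0 ((∑ n, d t n * q n) - r t)) :=
            mul_le_mul_of_nonneg_left hmax (hlam t)
        _ = a * (lam t * max 0 ((∑ n, d t n * p n) - r t))
              + b * (lam t * max 0 ((∑ n, d t n * q n) - r t)) := by ring
    have hpen' : ∑ t, lam t * max 0 ((∑ n, d t n * w n) - r t)
        ≤ a * (∑ t, lam t * max 0 ((∑ n, d t n * p n) - r t))
          + b * (∑ t, lam t * max 0 ((∑ n, d t n * q n) - r t)) := by
      calc ∑ t, lam t * max 0 ((∑ n, d t n * w n) - r t)
          ≤ ∑ t, (a * (lam t * max 0 ((∑ n, d t n * p n) - r t))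
              + b * (lam t * max 0 ((∑ n, d t n * q n) - r t))) :=
            Finset.sum_le_sum fun t _ => hpen t
        _ = a * (∑ t, lam t * max 0 ((∑ n, d t n * p n) - r t))
              + b * (∑ t, lam t * max 0 ((∑ n, d t n * q n) - r t)) := by
            rw [Finset.sum_add_distrib, Finset.mul_sum, Finset.mul_sum]
    linarith [hmain, hpen']
end
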